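/- Let (R, m) be a Noetherian local ring, b ⊆ R an ideal, and set a = m·b with a ⊆ m. Let G be a finitely generated R-module with b·G = 0. Then β₁^{R/a}(G) = β₁^R(G). -/

import Mathlib

/-- The minimal number of generators of a module; over a local ring this is the zeroth
Betti number `β₀(G) = dim_κ(G/mG)` of a minimal free resolution. -/
noncomputable def minGens (R M : Type*) [Semiring R] [AddCommMonoid M] [Module R M] : ℕ :=
  sInf {k | ∃ s : Finset M, s.card = k ∧ Submodule.span R (s : Set M) = ⊤}

/-- The first Betti number of a module over a local ring: the minimal number of
generators of the kernel of a (minimal) surjection `R^{β₀(G)} → G`. -/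
noncomputable def beta1 (R M : Type*) [CommRing R] [AddCommGroup M] [Module R M] : ℕ :=
  sInf {k | ∃ F : (Fin (minGens R M) → R) →ₗ[R] M,
    Function.Surjective F ∧ minGens R (LinearMap.ker F) = k}

namespace Stmt7Aux

open Submodule

/-- The set of cardinals of finsets generating a submodule. -/
def genSet (R : Type*) {M : Type*} [Semiring R] [AddCommMonoid M] [Module R M]
    (p : Submodule R M) : Set ℕ :=
  {k | ∃ s : Finset M, s.card = k ∧ Submodule.span R (s : Set M) = p}

section basic

variable {R M N : Type*} [CommRing R] [AddCommGroup M] [Module R M]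
  [AddCommGroup N] [Module R N]

lemma genSet_nonempty {p : Submodule R M} (hp : p.FG) : (genSet R p).Nonempty := by
  obtain ⟨s, hs⟩ := hp
  exact ⟨s.card, s, rfl, hs⟩

lemma minGens_le_card {s : Finset M} (h : span R (s : Set M) = ⊤) : minGens R M ≤ s.card :=
  Nat.sInf_le ⟨s, rfl, h⟩

lemma exists_minGens (R M : Type*) [Semiring R] [AddCommMonoid M] [Module R M]
    [Module.Finite R M] :
    ∃ s : Finset M, s.card = minGens R M ∧ span R (s : Set M) = ⊤ := by
  obtain ⟨s, hs⟩ := Module.Finite.fg_top (R := R) (M := M)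
  exact Nat.sInf_mem (⟨s.card, s, rfl, hs⟩ :
    {k | ∃ s : Finset M, s.card = k ∧ span R (s : Set M) = ⊤}.Nonempty)

lemma minGens_le_of_surjective [Module.Finite R M] (f : M →ₗ[R] N)
    (hf : Function.Surjective f) : minGens R N ≤ minGens R M := by
  haveI := Classical.decEq N
  obtain ⟨s, hcard, hspan⟩ := exists_minGens R M
  have hspan' : span R ((s.image f : Finset N) : Set N) = ⊤ := by
    rw [Finset.coe_image, ← Submodule.map_span, hspan, Submodule.map_top,
      LinearMap.range_eq_top.2 hf]
  calc minGens R N ≤ (s.image f).card := minGens_le_card hspan'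
    _ ≤ s.card := Finset.card_image_le
    _ = minGens R M := hcard

lemma minGens_eq_of_equiv [Module.Finite R M] (e : M ≃ₗ[R] N) :
    minGens R M = minGens R N := by
  haveI : Module.Finite R N := Module.Finite.equiv e
  exact le_antisymm (minGens_le_of_surjective e.symm.toLinearMap e.symm.surjective)
    (minGens_le_of_surjective e.toLinearMap e.surjective)

lemma sInf_genSet_le {p : Submodule R M} {s : Finset M} (h : span R (s : Set M) = p) :
    sInf (genSet R p) ≤ s.card := Nat.sInf_le ⟨s, rfl, h⟩

lemma minGens_submodule {p : Submodule R M} (hp : p.FG) :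
    minGens R p = sInf (genSet R p) := by
  haveI := Classical.decEq M
  haveI := Classical.decEq (↥p)
  apply le_antisymm
  · obtain ⟨s, hcard, hspan⟩ := Nat.sInf_mem (genSet_nonempty hp)
    set t : Finset p := s.attach.image
      (fun x => (⟨x.1, by rw [← hspan]; exact subset_span x.2⟩ : p)) with ht
    have himg : p.subtype '' (t : Set p) = (s : Set M) := by
      ext y
      constructor
      · rintro ⟨x, hx, rfl⟩
        simp only [ht, Finset.coe_image, Set.mem_image, Finset.mem_coe, Finset.mem_attach,
          true_and] at hx
        obtain ⟨z, _, rfl⟩ := hx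
        exact z.2
      · intro hy
        refine ⟨⟨y, by rw [← hspan]; exact subset_span hy⟩, ?_, rfl⟩
        rw [ht, Finset.mem_coe, Finset.mem_image]
        exact ⟨⟨y, Finset.mem_coe.mp hy⟩, Finset.mem_attach _ _, rfl⟩
    have hspan' : span R (t : Set p) = ⊤ := by
      apply Submodule.map_injective_of_injective (Submodule.injective_subtype p)
      rw [Submodule.map_span, himg, hspan, Submodule.map_top, Submodule.range_subtype]
    calc minGens R p ≤ t.card := minGens_le_card hspan'
      _ ≤ s.attach.card := Finset.card_image_le
      _ = s.card := Finset.card_attach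
      _ = sInf (genSet R p) := hcard
  · haveI : Module.Finite R p := Module.Finite.iff_fg.mpr hp
    obtain ⟨t, hcard, hspan⟩ := exists_minGens R p
    have hspan' : span R ((t.image p.subtype : Finset M) : Set M) = p := by
      rw [Finset.coe_image, ← Submodule.map_span, hspan, Submodule.map_top,
        Submodule.range_subtype]
    calc sInf (genSet R p) ≤ (t.image p.subtype).card := sInf_genSet_le hspan'
      _ ≤ t.card := Finset.card_image_le
      _ = minGens R p := hcard

end basic

section restrict

variable (R S M : Type*) [CommRing R] [CommRing S] [Algebra R S]
  [AddCommGroup M] [Module R M] [Module S M] [IsScalarTower R S M]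

lemma genSet_eq_restrictScalars (hsur : Function.Surjective (algebraMap R S))
    (p : Submodule S M) :
    genSet S p = genSet R (restrictScalars R p) := by
  ext k
  refine exists_congr fun s => and_congr_right fun _ => ?_
  rw [← Submodule.restrictScalars_span R S hsur (s : Set M)]
  exact ⟨fun h => by rw [h], fun h => Submodule.restrictScalars_injective R S M h⟩

lemma minGens_restrict (hsur : Function.Surjective (algebraMap R S)) :
    minGens S M = minGens R M := by
  unfold minGens
  congr 1
  ext k
  refine exists_congr fun s => and_congr_right fun _ => ?_
  constructor
  · intro h
    rw [← Submodule.restrictScalars_span R S hsur (s : Set M), h, restrictScalars_top]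
  · intro h
    apply Submodule.restrictScalars_injective R S M
    rw [Submodule.restrictScalars_span R S hsur (s : Set M), h, restrictScalars_top]

end restrict

section nakayama

variable {R M N : Type*} [CommRing R] [IsLocalRing R] [AddCommGroup M] [Module R M]
  [AddCommGroup N] [Module R N]

lemma sInf_genSet_map_eq {f : M →ₗ[R] N} (hf : Function.Surjective f)
    {K : Submodule R M} (hK : K.FG)
    (hker : LinearMap.ker f ≤ IsLocalRing.maximalIdeal R • K) :
    sInf (genSet R (K.map f)) = sInf (genSet R K) := by
  haveI := Classical.decEq M
  haveI := Classical.decEq N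
  apply le_antisymm
  · obtain ⟨s, hcard, hspan⟩ := Nat.sInf_mem (genSet_nonempty hK)
    have h1 : span R ((s.image f : Finset N) : Set N) = K.map f := by
      rw [Finset.coe_image, ← Submodule.map_span, hspan]
    calc sInf (genSet R (K.map f)) ≤ (s.image f).card := sInf_genSet_le h1
      _ ≤ s.card := Finset.card_image_le
      _ = sInf (genSet R K) := hcard
  · obtain ⟨s, hcard, hspan⟩ := Nat.sInf_mem (genSet_nonempty (hK.map f))
    have hmem : ∀ y : {y // y ∈ s}, ∃ x, x ∈ K ∧ f x = y.1 := by
      rintro ⟨y, hy⟩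
      have : y ∈ K.map f := hspan ▸ subset_span (Finset.mem_coe.mpr hy)
      obtain ⟨x, hx, hfx⟩ := Submodule.mem_map.mp this
      exact ⟨x, hx, hfx⟩
    choose g hgK hgf using hmem
    set t : Finset M := s.attach.image g with ht
    have hle : span R (t : Set M) ≤ K := by
      rw [span_le]
      rintro x hx
      rw [ht, Finset.coe_image] at hx
      obtain ⟨y, _, rfl⟩ := hx
      exact hgK y
    have himg : f '' (t : Set M) = (s : Set N) := by
      ext z
      constructor
      · rintro ⟨x, hx, rfl⟩
        rw [ht, Finset.coe_image] at hx
        obtain ⟨y, _, rfl⟩ := hx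
        rw [hgf y]
        exact Finset.mem_coe.mpr y.2
      · intro hz
        refine ⟨g ⟨z, Finset.mem_coe.mp hz⟩, ?_, hgf _⟩
        rw [ht, Finset.coe_image]
        exact ⟨_, Finset.mem_coe.mpr (Finset.mem_attach _ _), rfl⟩
    have hKle : K ≤ span R (t : Set M) ⊔ LinearMap.ker f := by
      intro x hx
      have hfx : f x ∈ Submodule.map f (span R (t : Set M)) := by
        rw [Submodule.map_span, himg, hspan]
        exact Submodule.mem_map_of_mem hx
      obtain ⟨z, hz, hzx⟩ := Submodule.mem_map.mp hfx
      refine Submodule.mem_sup.mpr ⟨z, hz, x - z, ?_, by abel⟩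
      rw [LinearMap.mem_ker, map_sub, hzx, sub_self]
    have h1 : K ≤ span R (t : Set M) ⊔ IsLocalRing.maximalIdeal R • K :=
      hKle.trans (sup_le_sup_left hker _)
    have h2 := Submodule.sup_eq_sup_smul_of_le_smul_of_le_jacobson
      (N := span R (t : Set M)) (J := ⊥) hK
      (IsLocalRing.maximalIdeal_le_jacobson ⊥) h1
    rw [Submodule.bot_smul, sup_bot_eq, sup_eq_right.mpr hle] at h2
    calc sInf (genSet R K) ≤ t.card := sInf_genSet_le h2.symm
      _ ≤ s.attach.card := Finset.card_image_le
      _ = s.card := Finset.card_attach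
      _ = sInf (genSet R (K.map f)) := hcard

end nakayama



section pi

variable {R : Type*} [CommRing R] {n : ℕ}

lemma mem_smul_top_pi (I : Ideal R) (x : Fin n → R) :
    x ∈ (I • ⊤ : Submodule R (Fin n → R)) ↔ ∀ i, x i ∈ I := by
  constructor
  · intro hx
    refine Submodule.smul_induction_on hx (fun r hr y _ i => ?_) (fun y z hy hz i => ?_)
    · simpa using I.mul_mem_right (y i) hr
    · exact I.add_mem (hy i) (hz i)
  · intro hx
    rw [pi_eq_sum_univ x]
    exact Submodule.sum_mem _ fun i _ => Submodule.smul_mem_smul (hx i) trivial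

end pi

end Stmt7Aux


/-- Let `(R, m)` be a Noetherian local ring, `b ⊆ R` an ideal, and
set `a = m·b` with `a ⊆ m`. Let `G` be a finitely generated `R`-module with `b·G = 0`.
Then `β₁^{R/a}(G) = β₁^R(G)`. (Since `aG = 0`, the natural `R/a`-module `G/aG` is
canonically `G` itself.) -/
theorem stmt_7 (R : Type*) [CommRing R] [IsNoetherianRing R] [IsLocalRing R]
    (b a : Ideal R) (ha : a = IsLocalRing.maximalIdeal R * b)
    (ha' : a ≤ IsLocalRing.maximalIdeal R)
    (G : Type*) [AddCommGroup G] [Module R G] [Module.Finite R G]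
    (hbG : ∀ x ∈ b, ∀ g : G, x • g = (0 : G)) :
    beta1 (R ⧸ a) (G ⧸ (a • ⊤ : Submodule R G)) = beta1 R G := by
  classical
  have hbot : (b • ⊤ : Submodule R G) = ⊥ := by
    rw [eq_bot_iff]
    refine Submodule.smul_le.2 fun r hr g _ => ?_
    rw [hbG r hr g]
    exact Submodule.zero_mem ⊥
  have hab : a ≤ b := ha ▸ Ideal.mul_le_right
  have habot : (a • ⊤ : Submodule R G) = ⊥ := by
    rw [eq_bot_iff, ← hbot]
    exact Submodule.smul_mono_left hab
  set m := IsLocalRing.maximalIdeal R with hm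
  let e : G ≃ₗ[R] (G ⧸ (a • ⊤ : Submodule R G)) := (Submodule.quotEquivOfEqBot _ habot).symm
  have hsur : Function.Surjective (algebraMap R (R ⧸ a)) := Ideal.Quotient.mk_surjective
  have hn : minGens (R ⧸ a) (G ⧸ (a • ⊤ : Submodule R G)) = minGens R G :=
    (Stmt7Aux.minGens_restrict R (R ⧸ a) _ hsur).trans (Stmt7Aux.minGens_eq_of_equiv e).symm
  set n := minGens R G with hn'
  let q : (Fin n → R) →ₗ[R] (Fin n → R ⧸ a) :=
    LinearMap.pi fun i => (Algebra.linearMap R (R ⧸ a)).comp (LinearMap.proj i)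
  have hq : ∀ (x : Fin n → R) (i : Fin n), q x i = algebraMap R (R ⧸ a) (x i) :=
    fun x i => rfl
  have hq_surj : Function.Surjective q := by
    intro y
    choose x hx using fun i => hsur (y i)
    exact ⟨x, funext fun i => (hq x i).trans (hx i)⟩
  have hq_ker : LinearMap.ker q = (a • ⊤ : Submodule R (Fin n → R)) := by
    ext x
    rw [LinearMap.mem_ker, Stmt7Aux.mem_smul_top_pi]
    constructor
    · intro h i
      have h2 : algebraMap R (R ⧸ a) (x i) = 0 := (hq x i).symm.trans (congrFun h i)
      rwa [Ideal.Quotient.algebraMap_eq, Ideal.Quotient.eq_zero_iff_mem] at h2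
    · intro h
      funext i
      show q x i = 0
      rw [hq, Ideal.Quotient.algebraMap_eq, Ideal.Quotient.eq_zero_iff_mem]
      exact h i
  have hbker : ∀ F : (Fin n → R) →ₗ[R] G,
      (b • ⊤ : Submodule R (Fin n → R)) ≤ LinearMap.ker F := by
    intro F
    refine Submodule.smul_le.2 fun r hr x _ => ?_
    rw [LinearMap.mem_ker, map_smul, hbG r hr]
  have ham : ∀ F : (Fin n → R) →ₗ[R] G, LinearMap.ker q ≤ m • LinearMap.ker F := by
    intro F
    rw [hq_ker, ha, ← Ideal.smul_eq_mul, Submodule.smul_assoc]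
    exact Submodule.smul_mono le_rfl (hbker F)
  have chain : ∀ (F : (Fin n → R) →ₗ[R] G)
      (Fb : (Fin n → R ⧸ a) →ₗ[R ⧸ a] (G ⧸ (a • ⊤ : Submodule R G))),
      Submodule.restrictScalars R (LinearMap.ker Fb) = Submodule.map q (LinearMap.ker F) →
      minGens (R ⧸ a) (LinearMap.ker Fb) = minGens R (LinearMap.ker F) := by
    intro F Fb hmap
    have hKfg : (LinearMap.ker F).FG := IsNoetherian.noetherian _
    have hKbfg : (LinearMap.ker Fb).FG := IsNoetherian.noetherian _
    rw [Stmt7Aux.minGens_submodule hKbfg, Stmt7Aux.minGens_submodule hKfg,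
      Stmt7Aux.genSet_eq_restrictScalars R (R ⧸ a) _ hsur, hmap,
      Stmt7Aux.sInf_genSet_map_eq hq_surj hKfg (ham F)]
  have hcast := congrArg (fun N : ℕ => sInf {k | ∃ F : (Fin N → R ⧸ a) →ₗ[R ⧸ a]
      (G ⧸ (a • ⊤ : Submodule R G)), Function.Surjective F ∧
      minGens (R ⧸ a) (LinearMap.ker F) = k}) hn
  unfold beta1
  refine Eq.trans hcast ?_
  beta_reduce
  congr 1
  ext k
  simp only [Set.mem_setOf_eq]
  constructor
  · rintro ⟨Fb, hFbs, hk⟩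
    refine ⟨e.symm.toLinearMap ∘ₗ ((Fb.restrictScalars R) ∘ₗ q), ?_, ?_⟩
    · exact e.symm.surjective.comp (hFbs.comp hq_surj)
    · have hkerF : LinearMap.ker (e.symm.toLinearMap ∘ₗ ((Fb.restrictScalars R) ∘ₗ q)) =
          Submodule.comap q (Submodule.restrictScalars R (LinearMap.ker Fb)) := by
        ext x
        simp [LinearMap.mem_ker, LinearEquiv.map_eq_zero_iff]
      rw [← hk]
      refine (chain _ Fb ?_).symm
      rw [hkerF, Submodule.map_comap_eq_of_surjective hq_surj]
  · rintro ⟨F, hFs, hk⟩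
    set v : Fin n → (G ⧸ (a • ⊤ : Submodule R G)) := fun j => e (F (Pi.single j 1)) with hv
    set Fb := Fintype.linearCombination (R ⧸ a) v with hFb
    have hcomm : ∀ x : Fin n → R, Fb (q x) = e (F x) := by
      have hmaps : (Fb.restrictScalars R) ∘ₗ q = (e : G →ₗ[R] _) ∘ₗ F := by
        apply LinearMap.pi_ext'
        intro i
        refine LinearMap.ext fun r => ?_
        show Fb (q (Pi.single i r)) = e (F (Pi.single i r))
        have h1 : q (Pi.single i r) = Pi.single i (algebraMap R (R ⧸ a) r) := by
          funext j
          rw [hq]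
          exact Pi.apply_single (fun _ y => algebraMap R (R ⧸ a) y) (fun _ => map_zero _) i r j
        have h2 : Pi.single i r = r • (Pi.single i 1 : Fin n → R) := by
          rw [← Pi.single_smul, smul_eq_mul, mul_one]
        rw [h1, hFb, Fintype.linearCombination_apply_single, algebraMap_smul, hv, h2,
          map_smul, map_smul]
      intro x
      exact LinearMap.congr_fun hmaps x
    have hFbs : Function.Surjective Fb := by
      intro z
      obtain ⟨y, rfl⟩ := e.surjective z
      obtain ⟨x, rfl⟩ := hFs y
      exact ⟨q x, hcomm x⟩
    refine ⟨Fb, hFbs, ?_⟩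
    rw [← hk]
    apply chain F Fb
    ext y
    simp only [Submodule.restrictScalars_mem, LinearMap.mem_ker, Submodule.mem_map]
    constructor
    · intro hy
      obtain ⟨x, rfl⟩ := hq_surj y
      refine ⟨x, ?_, rfl⟩
      apply e.injective
      rw [map_zero, ← hcomm x]
      exact hy
    · rintro ⟨x, hx, rfl⟩
      rw [hcomm x, hx, map_zero]
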